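/- Let g : ℝ≥0 → ℝ≥0 be differentiable with g(t)' ≤ −c₁ g(t)^{p} for all t with g(t) > 0, where c₁ > 0 and 0 < p < 1. Then g(t) = 0 for all t ≥ g(0)^{1−p}/(c₁(1−p)). -/

import Mathlib

theorem stmt_18 (g : ℝ → ℝ) (c₁ p : ℝ) (hc₁ : 0 < c₁) (hp₀ : 0 < p) (hp₁ : p < 1)
    (hnonneg : ∀ t ≥ 0, 0 ≤ g t) (hdiff : ∀ t ≥ 0, DifferentiableAt ℝ g t)
    (hineq : ∀ t ≥ 0, 0 < g t → deriv g t ≤ -c₁ * g t ^ p) :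
    ∀ t ≥ g 0 ^ (1 - p) / (c₁ * (1 - p)), g t = 0 := by
  intro t ht
  set q := 1 - p with hq
  have hq0 : 0 < q := by simp [hq]; linarith
  set T := g 0 ^ q / (c₁ * q) with hT
  have hcq : 0 < c₁ * q := mul_pos hc₁ hq0
  have hT0 : 0 ≤ T := div_nonneg (Real.rpow_nonneg (hnonneg 0 le_rfl) q) hcq.le
  have ht0 : 0 ≤ t := le_trans hT0 ht
  -- Step 1
  have step1 : ∃ t₀, 0 ≤ t₀ ∧ t₀ ≤ T ∧ g t₀ = 0 := by
    by_contra hcon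
    push_neg at hcon
    have hpos : ∀ u, 0 ≤ u → u ≤ T → 0 < g u := fun u h1 h2 =>
      lt_of_le_of_ne (hnonneg u h1) (Ne.symm (hcon u h1 h2))
    set F := fun u => g u ^ q + c₁ * q * u with hFdef
    have hFderiv : ∀ u, 0 ≤ u → u ≤ T →
        HasDerivAt F (deriv g u * q * g u ^ (q - 1) + c₁ * q) u := by
      intro u h1 h2
      have hg : HasDerivAt g (deriv g u) u := (hdiff u h1).hasDerivAt
      have h1' : HasDerivAt (fun x => g x ^ q) (deriv g u * q * g u ^ (q - 1)) u :=
        hg.rpow_const (Or.inl (hpos u h1 h2).ne')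
      have h2' : HasDerivAt (fun x => c₁ * q * x) (c₁ * q) u := by
        simpa using (hasDerivAt_id u).const_mul (c₁ * q)
      exact h1'.add h2'
    have hanti : AntitoneOn F (Set.Icc 0 T) := by
      apply antitoneOn_of_deriv_nonpos (convex_Icc 0 T)
      · intro u hu
        exact ((hFderiv u hu.1 hu.2).differentiableAt).continuousAt.continuousWithinAt
      · intro u hu
        rw [interior_Icc] at hu
        exact ((hFderiv u hu.1.le hu.2.le).differentiableAt).differentiableWithinAt
      · intro u hu
        rw [interior_Icc] at hu
        rw [(hFderiv u hu.1.le hu.2.le).deriv]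
        have hgu : 0 < g u := hpos u hu.1.le hu.2.le
        have hd := hineq u hu.1.le hgu
        have hpow : g u ^ p * g u ^ (q - 1) = 1 := by
          rw [← Real.rpow_add hgu]
          have : p + (q - 1) = 0 := by rw [hq]; ring
          rw [this, Real.rpow_zero]
        have hpowpos : 0 < g u ^ (q - 1) := Real.rpow_pos_of_pos hgu _
        have : deriv g u * g u ^ (q - 1) ≤ -c₁ * (g u ^ p * g u ^ (q - 1)) := by
          calc deriv g u * g u ^ (q - 1) ≤ (-c₁ * g u ^ p) * g u ^ (q - 1) :=
                mul_le_mul_of_nonneg_right hd hpowpos.le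
            _ = -c₁ * (g u ^ p * g u ^ (q - 1)) := by ring
        rw [hpow] at this
        nlinarith
    have hF : F T ≤ F 0 := hanti (Set.left_mem_Icc.mpr hT0) (Set.right_mem_Icc.mpr hT0) hT0
    have hTeq : c₁ * q * T = g 0 ^ q := by
      rw [hT, mul_div_assoc', mul_div_right_comm, div_self hcq.ne', one_mul]
    have hgT : 0 < g T ^ q := Real.rpow_pos_of_pos (hpos T hT0 le_rfl) _
    simp only [hFdef] at hF
    nlinarith
  obtain ⟨t₀, ht₀0, ht₀T, hgt₀⟩ := step1
  -- Step 2
  by_contra hgt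
  have hgtpos : 0 < g t := lt_of_le_of_ne (hnonneg t ht0) (Ne.symm hgt)
  have ht₀t : t₀ ≤ t := le_trans ht₀T ht
  -- continuity of g ∘ max · 0
  have hcontmax : Continuous (fun u => g (max u 0)) := by
    rw [continuous_iff_continuousAt]
    intro u
    have hm : ContinuousAt (fun u : ℝ => max u 0) u :=
      (continuous_id.max continuous_const).continuousAt
    show ContinuousAt (g ∘ fun u : ℝ => max u 0) u
    exact ContinuousAt.comp (g := g) (f := fun u : ℝ => max u 0) (x := u)
      ((hdiff (max u 0) (le_max_right _ _)).continuousAt) hm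
  set S := Set.Icc t₀ t ∩ (fun u => g (max u 0)) ⁻¹' {0} with hS
  have hScl : IsClosed S := (isClosed_Icc).inter (isClosed_singleton.preimage hcontmax)
  have ht₀S : t₀ ∈ S := by
    constructor
    · exact ⟨le_rfl, ht₀t⟩
    · simp [max_eq_left ht₀0, hgt₀]
  have hSbdd : BddAbove S := ⟨t, fun x hx => hx.1.2⟩
  set s := sSup S with hs
  have hsS : s ∈ S := hScl.csSup_mem ⟨t₀, ht₀S⟩ hSbdd
  have hs0 : 0 ≤ s := le_trans ht₀0 hsS.1.1
  have hgs : g s = 0 := by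
    have := hsS.2
    simpa [max_eq_left hs0] using this
  have hst : s < t := lt_of_le_of_ne hsS.1.2 (fun h => by rw [h] at hgs; exact hgt hgs)
  have hposmid : ∀ u, s < u → u ≤ t → 0 < g u := by
    intro u hu1 hu2
    rcases lt_or_eq_of_le (hnonneg u (le_trans hs0 hu1.le)) with h | h
    · exact h
    · exfalso
      have huS : u ∈ S := ⟨⟨le_trans hsS.1.1 hu1.le, hu2⟩, by
        simp [max_eq_left (le_trans hs0 hu1.le), ← h]⟩
      exact absurd (le_csSup hSbdd huS) (not_le.mpr hu1)
  have hanti : AntitoneOn g (Set.Icc s t) := by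
    apply antitoneOn_of_deriv_nonpos (convex_Icc s t)
    · intro u hu
      exact (hdiff u (le_trans hs0 hu.1)).continuousAt.continuousWithinAt
    · intro u hu
      rw [interior_Icc] at hu
      exact (hdiff u (le_trans hs0 hu.1.le)).differentiableWithinAt
    · intro u hu
      rw [interior_Icc] at hu
      have hgu : 0 < g u := hposmid u hu.1 hu.2.le
      have := hineq u (le_trans hs0 hu.1.le) hgu
      have hp' : 0 < g u ^ p := Real.rpow_pos_of_pos hgu _
      nlinarith
  have := hanti (Set.left_mem_Icc.mpr hst.le) (Set.right_mem_Icc.mpr hst.le) hst.le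
  rw [hgs] at this
  linarith
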